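/- If all edit cost functions are constant (c_vd, c_ed, c_vs, c_es, c_vi, c_ei are constants), then minimizing the cost of an independent edit path P from G1 to G2 is equivalent to maximizing M(P) = |\u011c1|·(c_vd+c_vi) on nodes plus |\u00ca1|·(c_ed+c_ei) on edges minus V_f·c_vs minus E_f·c_es, where V_f and E_f are the numbers of nodes and edges substituted at nonzero cost; explicitly, \u03b3(P) = |V1|c_vd + |E1|c_ed + |V2|c_vi + |E2|c_ei − M(P). -/

import Mathlib

/-- Elementary edit operations on labeled graphs. -/
inductive EditOp (L : Type) where
  | rmV (v : ℕ)
  | rmE (e : ℕ × ℕ)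
  | insV (v : ℕ) (l : L)
  | insE (e : ℕ × ℕ) (l : L)
  | subV (v : ℕ) (l : L)
  | subE (e : ℕ × ℕ) (l : L)

/-- A labeled graph (not assumed simple a priori). -/
structure EditGraph (L : Type) where
  V : Finset ℕ
  E : Finset (ℕ × ℕ)
  μ : ℕ → L
  ν : ℕ × ℕ → L

/-- A graph is simple: edges join existing vertices, at most one edge per
ordered pair (automatic from `Finset`), and no self-loops. -/
def EditGraph.IsSimple {L : Type} (G : EditGraph L) : Prop :=
  (∀ e ∈ G.E, e.1 ∈ G.V ∧ e.2 ∈ G.V) ∧ (∀ e ∈ G.E, e.1 ≠ e.2)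

/-- The effect of an elementary edit operation on a graph. -/
def EditGraph.apply {L : Type} (G : EditGraph L) : EditOp L → EditGraph L
  | .rmV v => { G with V := G.V.erase v }
  | .rmE e => { G with E := G.E.erase e }
  | .insV v l => { G with V := insert v G.V, μ := Function.update G.μ v l }
  | .insE e l => { G with E := insert e G.E, ν := Function.update G.ν e l }
  | .subV v l => { G with μ := Function.update G.μ v l }
  | .subE e l => { G with ν := Function.update G.ν e l }

/-- Edit-path legality constraints for an elementary operation: a node may be
removed only after all its incident edges have been removed; an edge may be
inserted only between two existing nodes, without creating a parallel edge or
a self-loop; removals and substitutions apply to existing elements; node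
insertion requires a fresh node. -/
def EditGraph.Legal {L : Type} (G : EditGraph L) : EditOp L → Prop
  | .rmV v => v ∈ G.V ∧ ∀ e ∈ G.E, e.1 ≠ v ∧ e.2 ≠ v
  | .rmE e => e ∈ G.E
  | .insV v _ => v ∉ G.V
  | .insE e _ => e.1 ∈ G.V ∧ e.2 ∈ G.V ∧ e ∉ G.E ∧ e.1 ≠ e.2
  | .subV v _ => v ∈ G.V
  | .subE e _ => e ∈ G.E

/-- `IsEditPath G P G'` : the sequence of elementary operations `P` is an edit
path of `G` (each operation is legal when performed) transforming `G` into `G'`. -/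
inductive IsEditPath {L : Type} : EditGraph L → List (EditOp L) → EditGraph L → Prop
  | nil (G : EditGraph L) : IsEditPath G [] G
  | cons {G G'' : EditGraph L} {op : EditOp L} {P : List (EditOp L)} :
      G.Legal op → IsEditPath (G.apply op) P G'' → IsEditPath G (op :: P) G''

/-- Classification of elementary operations. -/
def EditOp.isRemoval {L : Type} : EditOp L → Prop
  | .rmV _ => True | .rmE _ => True | _ => False

def EditOp.isSubstitution {L : Type} : EditOp L → Prop
  | .subV _ _ => True | .subE _ _ => True | _ => False

def EditOp.isInsertion {L : Type} : EditOp L → Prop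
  | .insV _ _ => True | .insE _ _ => True | _ => False

/-- An independent edit path: no node or edge is both substituted and removed,
none is both substituted and inserted, no inserted element is later removed,
and every node or edge is substituted at most once. -/
def Indep {L : Type} (P : List (EditOp L)) : Prop :=
  (∀ v l, EditOp.subV v l ∈ P → EditOp.rmV (L := L) v ∉ P) ∧
  (∀ e l, EditOp.subE e l ∈ P → EditOp.rmE (L := L) e ∉ P) ∧
  (∀ v l l', EditOp.subV v l ∈ P → EditOp.insV v l' ∉ P) ∧
  (∀ e l l', EditOp.subE e l ∈ P → EditOp.insE e l' ∉ P) ∧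
  (∀ v l, ¬ List.Sublist [EditOp.insV v l, EditOp.rmV v] P) ∧
  (∀ e l, ¬ List.Sublist [EditOp.insE e l, EditOp.rmE e] P) ∧
  (∀ v, P.countP (fun op => match op with | .subV w _ => decide (w = v) | _ => false) ≤ 1) ∧
  (∀ e, P.countP (fun op => match op with | .subE f _ => decide (f = e) | _ => false) ≤ 1)

/-- Cost of an elementary operation, performed on the current graph `G`
(substitution costs depend on the old and new labels). -/
def opCost {L : Type} (cvd : ℕ → ℝ) (ced : ℕ × ℕ → ℝ) (cvi : ℕ → L → ℝ)
    (cei : ℕ × ℕ → L → ℝ) (cvs : ℕ → L → L → ℝ) (ces : ℕ × ℕ → L → L → ℝ)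
    (G : EditGraph L) : EditOp L → ℝ
  | .rmV v => cvd v
  | .rmE e => ced e
  | .insV v l => cvi v l
  | .insE e l => cei e l
  | .subV v l => cvs v (G.μ v) l
  | .subE e l => ces e (G.ν e) l

/-- Cost of an edit path: the sum of the costs of its elementary operations. -/
def pathCost {L : Type} (cvd : ℕ → ℝ) (ced : ℕ × ℕ → ℝ) (cvi : ℕ → L → ℝ)
    (cei : ℕ × ℕ → L → ℝ) (cvs : ℕ → L → L → ℝ) (ces : ℕ × ℕ → L → L → ℝ)
    (G : EditGraph L) : List (EditOp L) → ℝ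
  | [] => 0
  | op :: P => opCost cvd ced cvi cei cvs ces G op
      + pathCost cvd ced cvi cei cvs ces (G.apply op) P


section Aux

variable {L : Type} [DecidableEq L]

/-- The graph obtained by applying a sequence of operations. -/
def applyPath (G : EditGraph L) : List (EditOp L) → EditGraph L
  | [] => G
  | op :: P => applyPath (G.apply op) P

lemma applyPath_eq {G G' : EditGraph L} {P : List (EditOp L)} (h : IsEditPath G P G') :
    applyPath G P = G' := by
  induction h with
  | nil => rfl
  | cons hl hp ih => simpa [applyPath] using ih

lemma applyPath_append (G : EditGraph L) (P Q : List (EditOp L)) :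
    applyPath G (P ++ Q) = applyPath (applyPath G P) Q := by
  induction P generalizing G with
  | nil => rfl
  | cons op P ih => simp [applyPath, ih]

lemma pathCost_append (cvd : ℕ → ℝ) (ced : ℕ × ℕ → ℝ) (cvi : ℕ → L → ℝ)
    (cei : ℕ × ℕ → L → ℝ) (cvs : ℕ → L → L → ℝ) (ces : ℕ × ℕ → L → L → ℝ)
    (G : EditGraph L) (P Q : List (EditOp L)) :
    pathCost cvd ced cvi cei cvs ces G (P ++ Q)
      = pathCost cvd ced cvi cei cvs ces G P
        + pathCost cvd ced cvi cei cvs ces (applyPath G P) Q := by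
  induction P generalizing G with
  | nil => simp [pathCost, applyPath]
  | cons op P ih => simp [pathCost, applyPath, ih, add_assoc]

lemma removal_phase (cvd ced cvi cei cvs ces : ℝ) {G G' : EditGraph L} {P : List (EditOp L)}
    (hP : ∀ op ∈ P, op.isRemoval) (h : IsEditPath G P G') :
    G.V.card = G'.V.card + P.countP (fun op => match op with | .rmV _ => true | _ => false)
    ∧ G.E.card = G'.E.card + P.countP (fun op => match op with | .rmE _ => true | _ => false)
    ∧ pathCost (fun _ => cvd) (fun _ => ced) (fun _ _ => cvi) (fun _ _ => cei)
        (fun _ l l' => if l = l' then 0 else cvs) (fun _ l l' => if l = l' then 0 else ces) G P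
      = (P.countP (fun op => match op with | .rmV _ => true | _ => false) : ℝ) * cvd
        + (P.countP (fun op => match op with | .rmE _ => true | _ => false) : ℝ) * ced := by
  revert hP
  induction h with
  | nil => intro _; simp [pathCost]
  | @cons G G'' op P hl hp ih =>
    intro hP
    have hhead := hP op (List.mem_cons_self)
    have htail : ∀ o ∈ P, o.isRemoval := fun o ho => hP o (List.mem_cons_of_mem _ ho)
    obtain ⟨ih1, ih2, ih3⟩ := ih htail
    cases op with
    | rmV v =>
      have hv : v ∈ G.V := hl.1
      have hc : (G.V.erase v).card + 1 = G.V.card := Finset.card_erase_add_one hv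
      have ih1' : (G.V.erase v).card = G''.V.card
          + P.countP (fun op => match op with | .rmV _ => true | _ => false) := ih1
      have ih2' : G.E.card = G''.E.card
          + P.countP (fun op => match op with | .rmE _ => true | _ => false) := ih2
      have e1 : (EditOp.rmV (L := L) v :: P).countP
          (fun op => match op with | .rmV _ => true | _ => false)
          = P.countP (fun op => match op with | .rmV _ => true | _ => false) + 1 := by
        simp [List.countP_cons]
      have e2 : (EditOp.rmV (L := L) v :: P).countP
          (fun op => match op with | .rmE _ => true | _ => false)
          = P.countP (fun op => match op with | .rmE _ => true | _ => false) := by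
        simp [List.countP_cons]
      refine ⟨by rw [e1]; omega, by rw [e2]; omega, ?_⟩
      rw [e1, e2, pathCost]
      have hco : opCost (fun _ => cvd) (fun _ => ced) (fun _ _ => cvi) (fun _ _ => cei)
          (fun _ l l' => if l = l' then 0 else cvs) (fun _ l l' => if l = l' then 0 else ces)
          G (EditOp.rmV v) = cvd := rfl
      rw [hco, ih3]
      push_cast
      ring
    | rmE e =>
      have hc : (G.E.erase e).card + 1 = G.E.card := Finset.card_erase_add_one hl
      have ih1' : G.V.card = G''.V.card
          + P.countP (fun op => match op with | .rmV _ => true | _ => false) := ih1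
      have ih2' : (G.E.erase e).card = G''.E.card
          + P.countP (fun op => match op with | .rmE _ => true | _ => false) := ih2
      have e1 : (EditOp.rmE (L := L) e :: P).countP
          (fun op => match op with | .rmV _ => true | _ => false)
          = P.countP (fun op => match op with | .rmV _ => true | _ => false) := by
        simp [List.countP_cons]
      have e2 : (EditOp.rmE (L := L) e :: P).countP
          (fun op => match op with | .rmE _ => true | _ => false)
          = P.countP (fun op => match op with | .rmE _ => true | _ => false) + 1 := by
        simp [List.countP_cons]
      refine ⟨by rw [e1]; omega, by rw [e2]; omega, ?_⟩
      rw [e1, e2, pathCost]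
      have hco : opCost (fun _ => cvd) (fun _ => ced) (fun _ _ => cvi) (fun _ _ => cei)
          (fun _ l l' => if l = l' then 0 else cvs) (fun _ l l' => if l = l' then 0 else ces)
          G (EditOp.rmE e) = ced := rfl
      rw [hco, ih3]
      push_cast
      ring
    | insV v l => exact absurd hhead (by simp [EditOp.isRemoval])
    | insE e l => exact absurd hhead (by simp [EditOp.isRemoval])
    | subV v l => exact absurd hhead (by simp [EditOp.isRemoval])
    | subE e l => exact absurd hhead (by simp [EditOp.isRemoval])

lemma insertion_phase (cvd ced cvi cei cvs ces : ℝ) {G G' : EditGraph L} {P : List (EditOp L)}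
    (hP : ∀ op ∈ P, op.isInsertion) (h : IsEditPath G P G') :
    G'.V.card = G.V.card + P.countP (fun op => match op with | .insV _ _ => true | _ => false)
    ∧ G'.E.card = G.E.card + P.countP (fun op => match op with | .insE _ _ => true | _ => false)
    ∧ pathCost (fun _ => cvd) (fun _ => ced) (fun _ _ => cvi) (fun _ _ => cei)
        (fun _ l l' => if l = l' then 0 else cvs) (fun _ l l' => if l = l' then 0 else ces) G P
      = (P.countP (fun op => match op with | .insV _ _ => true | _ => false) : ℝ) * cvi
        + (P.countP (fun op => match op with | .insE _ _ => true | _ => false) : ℝ) * cei := by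
  revert hP
  induction h with
  | nil => intro _; simp [pathCost]
  | @cons G G'' op P hl hp ih =>
    intro hP
    have hhead := hP op (List.mem_cons_self)
    have htail : ∀ o ∈ P, o.isInsertion := fun o ho => hP o (List.mem_cons_of_mem _ ho)
    obtain ⟨ih1, ih2, ih3⟩ := ih htail
    cases op with
    | insV v l =>
      have hv : v ∉ G.V := hl
      have hc : (insert v G.V).card = G.V.card + 1 := Finset.card_insert_of_notMem hv
      have ih1' : G''.V.card = (insert v G.V).card
          + P.countP (fun op => match op with | .insV _ _ => true | _ => false) := ih1
      have ih2' : G''.E.card = G.E.card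
          + P.countP (fun op => match op with | .insE _ _ => true | _ => false) := ih2
      have e1 : (EditOp.insV v l :: P).countP
          (fun op => match op with | .insV _ _ => true | _ => false)
          = P.countP (fun op => match op with | .insV _ _ => true | _ => false) + 1 := by
        simp [List.countP_cons]
      have e2 : (EditOp.insV v l :: P).countP
          (fun op => match op with | .insE _ _ => true | _ => false)
          = P.countP (fun op => match op with | .insE _ _ => true | _ => false) := by
        simp [List.countP_cons]
      refine ⟨by rw [e1]; omega, by rw [e2]; omega, ?_⟩
      rw [e1, e2, pathCost]
      have hco : opCost (fun _ => cvd) (fun _ => ced) (fun _ _ => cvi) (fun _ _ => cei)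
          (fun _ l l' => if l = l' then 0 else cvs) (fun _ l l' => if l = l' then 0 else ces)
          G (EditOp.insV v l) = cvi := rfl
      rw [hco, ih3]
      push_cast
      ring
    | insE e l =>
      have he : e ∉ G.E := hl.2.2.1
      have hc : (insert e G.E).card = G.E.card + 1 := Finset.card_insert_of_notMem he
      have ih1' : G''.V.card = G.V.card
          + P.countP (fun op => match op with | .insV _ _ => true | _ => false) := ih1
      have ih2' : G''.E.card = (insert e G.E).card
          + P.countP (fun op => match op with | .insE _ _ => true | _ => false) := ih2
      have e1 : (EditOp.insE e l :: P).countP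
          (fun op => match op with | .insV _ _ => true | _ => false)
          = P.countP (fun op => match op with | .insV _ _ => true | _ => false) := by
        simp [List.countP_cons]
      have e2 : (EditOp.insE e l :: P).countP
          (fun op => match op with | .insE _ _ => true | _ => false)
          = P.countP (fun op => match op with | .insE _ _ => true | _ => false) + 1 := by
        simp [List.countP_cons]
      refine ⟨by rw [e1]; omega, by rw [e2]; omega, ?_⟩
      rw [e1, e2, pathCost]
      have hco : opCost (fun _ => cvd) (fun _ => ced) (fun _ _ => cvi) (fun _ _ => cei)
          (fun _ l l' => if l = l' then 0 else cvs) (fun _ l l' => if l = l' then 0 else ces)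
          G (EditOp.insE e l) = cei := rfl
      rw [hco, ih3]
      push_cast
      ring
    | rmV v => exact absurd hhead (by simp [EditOp.isInsertion])
    | rmE e => exact absurd hhead (by simp [EditOp.isInsertion])
    | subV v l => exact absurd hhead (by simp [EditOp.isInsertion])
    | subE e l => exact absurd hhead (by simp [EditOp.isInsertion])

lemma subst_stable {G G' : EditGraph L} {P : List (EditOp L)}
    (hP : ∀ op ∈ P, op.isSubstitution) (h : IsEditPath G P G') :
    G'.V = G.V ∧ G'.E = G.E
    ∧ (∀ v, (∀ l, EditOp.subV v l ∉ P) → G'.μ v = G.μ v)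
    ∧ (∀ e, (∀ l, EditOp.subE e l ∉ P) → G'.ν e = G.ν e) := by
  revert hP
  induction h with
  | nil => intro _; exact ⟨rfl, rfl, fun _ _ => rfl, fun _ _ => rfl⟩
  | @cons G G'' op P hl hp ih =>
    intro hP
    have hhead := hP op (List.mem_cons_self)
    have htail : ∀ o ∈ P, o.isSubstitution := fun o ho => hP o (List.mem_cons_of_mem _ ho)
    obtain ⟨ih1, ih2, ih3, ih4⟩ := ih htail
    cases op with
    | subV w l =>
      refine ⟨ih1, ih2, ?_, ?_⟩
      · intro v hv
        have hwv : w ≠ v := by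
          rintro rfl
          exact hv l (List.mem_cons_self)
        have := ih3 v (fun l' hl' => hv l' (List.mem_cons_of_mem _ hl'))
        rw [this]
        simp [EditGraph.apply, Function.update_of_ne (Ne.symm hwv)]
      · intro e he
        have := ih4 e (fun l' hl' => he l' (by simp [hl']))
        rw [this]
        simp [EditGraph.apply]
    | subE f l =>
      refine ⟨ih1, ih2, ?_, ?_⟩
      · intro v hv
        have := ih3 v (fun l' hl' => hv l' (by simp [hl']))
        rw [this]
        simp [EditGraph.apply]
      · intro e he
        have hfe : f ≠ e := by
          rintro rfl
          exact he l (List.mem_cons_self)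
        have := ih4 e (fun l' hl' => he l' (List.mem_cons_of_mem _ hl'))
        rw [this]
        simp [EditGraph.apply, Function.update_of_ne (Ne.symm hfe)]
    | rmV v => exact absurd hhead (by simp [EditOp.isSubstitution])
    | rmE e => exact absurd hhead (by simp [EditOp.isSubstitution])
    | insV v l => exact absurd hhead (by simp [EditOp.isSubstitution])
    | insE e l => exact absurd hhead (by simp [EditOp.isSubstitution])

lemma subst_phase (cvd ced cvi cei cvs ces : ℝ) {G G' : EditGraph L} {P : List (EditOp L)}
    (hP : ∀ op ∈ P, op.isSubstitution)
    (hcV : ∀ v, P.countP (fun op => match op with | .subV w _ => decide (w = v) | _ => false) ≤ 1)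
    (hcE : ∀ e, P.countP (fun op => match op with | .subE f _ => decide (f = e) | _ => false) ≤ 1)
    (h : IsEditPath G P G') :
    pathCost (fun _ => cvd) (fun _ => ced) (fun _ _ => cvi) (fun _ _ => cei)
        (fun _ l l' => if l = l' then 0 else cvs) (fun _ l l' => if l = l' then 0 else ces) G P
      = ((G.V.filter (fun v => G.μ v ≠ G'.μ v)).card : ℝ) * cvs
        + ((G.E.filter (fun e => G.ν e ≠ G'.ν e)).card : ℝ) * ces := by
  revert hP hcV hcE
  induction h with
  | nil => intro _ _ _; simp [pathCost]
  | @cons G G'' op P hl hp ih =>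
    intro hP hcV hcE
    have hhead := hP op (List.mem_cons_self)
    have htail : ∀ o ∈ P, o.isSubstitution := fun o ho => hP o (List.mem_cons_of_mem _ ho)
    obtain ⟨hV, hE, hμ, hν⟩ := subst_stable htail hp
    cases op with
    | subV v l =>
      -- no further substitution on v in P
      have hvV : v ∈ G.V := hl
      have hv0 : ∀ l', EditOp.subV v l' ∉ P := by
        intro l' hl'
        have h1 := hcV v
        have h2 : (EditOp.subV v l :: P).countP
            (fun op => match op with | .subV w _ => decide (w = v) | _ => false)
            = P.countP (fun op => match op with | .subV w _ => decide (w = v) | _ => false)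
              + 1 := by simp [List.countP_cons]
        rw [h2] at h1
        have hpos : 0 < P.countP
            (fun op => match op with | .subV w _ => decide (w = v) | _ => false) :=
          List.countP_pos_iff.2 ⟨_, hl', by simp⟩
        omega
      have htc : ∀ w, P.countP
          (fun op => match op with | .subV u _ => decide (u = w) | _ => false) ≤ 1 := by
        intro w
        have := hcV w
        simp only [List.countP_cons] at this
        omega
      have htcE : ∀ e, P.countP
          (fun op => match op with | .subE f _ => decide (f = e) | _ => false) ≤ 1 := by
        intro e
        have := hcE e
        simp only [List.countP_cons] at this
        omega
      have hG'v : G''.μ v = l := by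
        have := hμ v hv0
        simpa [EditGraph.apply] using this
      have hVap : (G.apply (.subV v l)).V = G.V := rfl
      have hEap : (G.apply (.subV v l)).E = G.E := rfl
      have hEfilter : (G.apply (.subV v l)).E.filter (fun e => (G.apply (.subV v l)).ν e ≠ G''.ν e)
          = G.E.filter (fun e => G.ν e ≠ G''.ν e) := rfl
      have ihc := ih htail htc htcE
      rw [pathCost]
      rw [ihc]
      by_cases hsame : G.μ v = l
      · have hupd : Function.update G.μ v l = G.μ := by
          rw [← hsame]; exact Function.update_eq_self v G.μ
        have : (G.apply (.subV v l)).V.filter (fun w => (G.apply (.subV v l)).μ w ≠ G''.μ w)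
            = G.V.filter (fun w => G.μ w ≠ G''.μ w) := by
          simp [EditGraph.apply, hupd]
        rw [this, hEfilter]
        simp [opCost, hsame]
      · -- v contributes
        have hset : G.V.filter (fun w => G.μ w ≠ G''.μ w)
            = insert v ((G.apply (.subV v l)).V.filter
                (fun w => (G.apply (.subV v l)).μ w ≠ G''.μ w)) := by
          ext w
          by_cases hwv : w = v
          · subst hwv
            simp [EditGraph.apply, hG'v, hvV, Ne.symm, hsame]
          · simp only [Finset.mem_filter, Finset.mem_insert]; simp [EditGraph.apply, hwv, Function.update_of_ne hwv]
        have hnotmem : v ∉ (G.apply (.subV v l)).V.filter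
            (fun w => (G.apply (.subV v l)).μ w ≠ G''.μ w) := by
          rw [Finset.mem_filter]; simp [EditGraph.apply, hG'v]
        have hcard : (G.V.filter (fun w => G.μ w ≠ G''.μ w)).card
            = ((G.apply (.subV v l)).V.filter
                (fun w => (G.apply (.subV v l)).μ w ≠ G''.μ w)).card + 1 := by
          rw [hset, Finset.card_insert_of_notMem hnotmem]
        rw [hEfilter] at *
        rw [hcard]
        simp only [opCost, if_neg hsame]
        push_cast
        ring
    | subE f l =>
      have hfE : f ∈ G.E := hl
      have hf0 : ∀ l', EditOp.subE f l' ∉ P := by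
        intro l' hl'
        have h1 := hcE f
        have h2 : (EditOp.subE f l :: P).countP
            (fun op => match op with | .subE g _ => decide (g = f) | _ => false)
            = P.countP (fun op => match op with | .subE g _ => decide (g = f) | _ => false)
              + 1 := by simp [List.countP_cons]
        rw [h2] at h1
        have hpos : 0 < P.countP
            (fun op => match op with | .subE g _ => decide (g = f) | _ => false) :=
          List.countP_pos_iff.2 ⟨_, hl', by simp⟩
        omega
      have htc : ∀ w, P.countP
          (fun op => match op with | .subV u _ => decide (u = w) | _ => false) ≤ 1 := by
        intro w
        have := hcV w
        simp only [List.countP_cons] at this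
        omega
      have htcE : ∀ e, P.countP
          (fun op => match op with | .subE g _ => decide (g = e) | _ => false) ≤ 1 := by
        intro e
        have := hcE e
        simp only [List.countP_cons] at this
        omega
      have hG'f : G''.ν f = l := by
        have := hν f hf0
        simpa [EditGraph.apply] using this
      have hVfilter : (G.apply (.subE f l)).V.filter (fun w => (G.apply (.subE f l)).μ w ≠ G''.μ w)
          = G.V.filter (fun w => G.μ w ≠ G''.μ w) := rfl
      have ihc := ih htail htc htcE
      rw [pathCost]
      rw [ihc]
      by_cases hsame : G.ν f = l
      · have hupd : Function.update G.ν f l = G.ν := by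
          rw [← hsame]; exact Function.update_eq_self f G.ν
        have : (G.apply (.subE f l)).E.filter (fun e => (G.apply (.subE f l)).ν e ≠ G''.ν e)
            = G.E.filter (fun e => G.ν e ≠ G''.ν e) := by
          simp [EditGraph.apply, hupd]
        rw [this, hVfilter]
        simp [opCost, hsame]
      · have hset : G.E.filter (fun e => G.ν e ≠ G''.ν e)
            = insert f ((G.apply (.subE f l)).E.filter
                (fun e => (G.apply (.subE f l)).ν e ≠ G''.ν e)) := by
          ext e
          by_cases hef : e = f
          · subst hef
            simp [EditGraph.apply, hG'f, hfE, Ne.symm, hsame]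
          · simp only [Finset.mem_filter, Finset.mem_insert]; simp [EditGraph.apply, hef, Function.update_of_ne hef]
        have hnotmem : f ∉ (G.apply (.subE f l)).E.filter
            (fun e => (G.apply (.subE f l)).ν e ≠ G''.ν e) := by
          rw [Finset.mem_filter]; simp [EditGraph.apply, hG'f]
        have hcard : (G.E.filter (fun e => G.ν e ≠ G''.ν e)).card
            = ((G.apply (.subE f l)).E.filter
                (fun e => (G.apply (.subE f l)).ν e ≠ G''.ν e)).card + 1 := by
          rw [hset, Finset.card_insert_of_notMem hnotmem]
        rw [hVfilter] at *
        rw [hcard]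
        simp only [opCost, if_neg hsame]
        push_cast
        ring
    | rmV v => exact absurd hhead (by simp [EditOp.isSubstitution])
    | rmE e => exact absurd hhead (by simp [EditOp.isSubstitution])
    | insV v l => exact absurd hhead (by simp [EditOp.isSubstitution])
    | insE e l => exact absurd hhead (by simp [EditOp.isSubstitution])

end Aux


/-- with constant edit cost functions
(`cvd, ced, cvs, ces, cvi, cei` constants, identity substitutions free),
the cost of an independent edit path `P = (R,S,I)` from `G1` to `G2` is
`γ(P) = |V1|·cvd + |E1|·ced + |V2|·cvi + |E2|·cei − M(P)` where
`M(P) = |V̂1|(cvd+cvi) + |Ê1|(ced+cei) − V_f·cvs − E_f·ces`, with `V_f`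
(resp. `E_f`) the number of nodes (resp. edges) substituted at nonzero cost.
Hence minimizing `γ(P)` is equivalent to maximizing `M(P)`. -/
theorem indep_editPath_cost_const {L : Type} [DecidableEq L] (G1 G2 H1 H2 : EditGraph L)
    (cvd ced cvi cei cvs ces : ℝ)
    (R S I : List (EditOp L)) (hG1 : G1.IsSimple)
    (hR : ∀ op ∈ R, op.isRemoval) (hS : ∀ op ∈ S, op.isSubstitution)
    (hI : ∀ op ∈ I, op.isInsertion)
    (hInd : Indep (R ++ S ++ I))
    (h1 : IsEditPath G1 R H1) (h2 : IsEditPath H1 S H2) (h3 : IsEditPath H2 I G2) :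
    pathCost (fun _ => cvd) (fun _ => ced) (fun _ _ => cvi) (fun _ _ => cei)
        (fun _ l l' => if l = l' then 0 else cvs)
        (fun _ l l' => if l = l' then 0 else ces) G1 (R ++ S ++ I)
      = (G1.V.card : ℝ) * cvd + (G1.E.card : ℝ) * ced
        + (G2.V.card : ℝ) * cvi + (G2.E.card : ℝ) * cei
        - ((H1.V.card : ℝ) * (cvd + cvi) + (H1.E.card : ℝ) * (ced + cei)
            - ((H1.V.filter (fun v => H1.μ v ≠ H2.μ v)).card : ℝ) * cvs
            - ((H1.E.filter (fun e => H1.ν e ≠ H2.ν e)).card : ℝ) * ces) := by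
  classical
  obtain ⟨-, -, -, -, -, -, hcV, hcE⟩ := hInd
  have hSsub : List.Sublist S (R ++ S ++ I) :=
    (List.sublist_append_right R S).trans (List.sublist_append_left (R ++ S) I)
  have hScV : ∀ v, S.countP
      (fun op => match op with | .subV w _ => decide (w = v) | _ => false) ≤ 1 :=
    fun v => le_trans (hSsub.countP_le) (hcV v)
  have hScE : ∀ e, S.countP
      (fun op => match op with | .subE f _ => decide (f = e) | _ => false) ≤ 1 :=
    fun e => le_trans (hSsub.countP_le) (hcE e)
  obtain ⟨r1, r2, r3⟩ := removal_phase cvd ced cvi cei cvs ces hR h1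
  obtain ⟨i1, i2, i3⟩ := insertion_phase cvd ced cvi cei cvs ces hI h3
  have s3 := subst_phase cvd ced cvi cei cvs ces hS hScV hScE h2
  obtain ⟨sV, sE, -, -⟩ := subst_stable hS h2
  have hA1 : applyPath G1 R = H1 := applyPath_eq h1
  have hA2 : applyPath H1 S = H2 := applyPath_eq h2
  rw [pathCost_append, pathCost_append, applyPath_append, hA1, hA2, r3, s3, i3]
  have r1' : (G1.V.card : ℝ) = (H1.V.card : ℝ)
      + (R.countP (fun op => match op with | .rmV _ => true | _ => false) : ℝ) := by
    exact_mod_cast congrArg (Nat.cast (R := ℝ)) r1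
  have r2' : (G1.E.card : ℝ) = (H1.E.card : ℝ)
      + (R.countP (fun op => match op with | .rmE _ => true | _ => false) : ℝ) := by
    exact_mod_cast congrArg (Nat.cast (R := ℝ)) r2
  rw [sV] at i1
  rw [sE] at i2
  have i1' : (G2.V.card : ℝ) = (H1.V.card : ℝ)
      + (I.countP (fun op => match op with | .insV _ _ => true | _ => false) : ℝ) := by
    exact_mod_cast congrArg (Nat.cast (R := ℝ)) i1
  have i2' : (G2.E.card : ℝ) = (H1.E.card : ℝ)
      + (I.countP (fun op => match op with | .insE _ _ => true | _ => false) : ℝ) := by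
    exact_mod_cast congrArg (Nat.cast (R := ℝ)) i2
  rw [r1', r2', i1', i2']
  ring
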